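/- The nodes in the output Y of the KUNodes algorithm have pairwise disjoint leaf-descendant sets: for distinct θ, θ' ∈ Y, no leaf is a descendant of both θ and θ'. -/
import Mathlib


open Classical

/-- Nodes of a complete binary tree of height `h` are bit strings of length
at most `h`; the root is `[]`, leaves have length `h`. `TreePath ν` is the
set of nodes on the path from `ν` to the root, inclusive (the prefixes). -/
def TreePath (ν : List Bool) : Set (List Bool) := {θ | θ <+: ν}

/-- The set `X` in the KUNodes algorithm: the union of the paths from the
revoked leaves in `RL` to the root. -/
def KUX (RL : Set (List Bool)) : Set (List Bool) := ⋃ ν ∈ RL, TreePath ν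

/-- The output `Y` of the KUNodes algorithm on a complete binary tree of
height `h`: the children (within the tree) of nodes of `X` that are not
themselves in `X`; if this set is empty, `Y := {root}`. -/
noncomputable def KUNodes (h : ℕ) (RL : Set (List Bool)) : Set (List Bool) :=
  let X := KUX RL
  let Y := {c : List Bool | ∃ θ ∈ X, ∃ b : Bool, c = θ ++ [b] ∧ c.length ≤ h ∧ c ∉ X}
  if Y = ∅ then {([] : List Bool)} else Y

/-- The nodes output by KUNodes have pairwise disjoint sets of leaf
descendants: for distinct `θ, θ' ∈ Y`, no leaf `ℓ` is a descendant of both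
(`ℓ` is a descendant of `θ` iff `θ ∈ Path(ℓ)`). -/
theorem kunodes_pairwise_disjoint_descendants (h : ℕ) (RL : Set (List Bool))
    (hRL : ∀ ν ∈ RL, ν.length = h) (θ θ' : List Bool)
    (hθ : θ ∈ KUNodes h RL) (hθ' : θ' ∈ KUNodes h RL) (hne : θ ≠ θ') :
    ¬ ∃ ℓ : List Bool, ℓ.length = h ∧ θ ∈ TreePath ℓ ∧ θ' ∈ TreePath ℓ := by
  have Xclosed : ∀ a b : List Bool, a <+: b → b ∈ KUX RL → a ∈ KUX RL := by
    intro a b hab hb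
    simp only [KUX, Set.mem_iUnion, TreePath, Set.mem_setOf_eq] at hb ⊢
    obtain ⟨ν, hν, hbv⟩ := hb
    exact ⟨ν, hν, hab.trans hbv⟩
  -- key: two distinct members of Y are prefix-incomparable
  have key : ∀ a b : List Bool,
      a ∈ KUNodes h RL → b ∈ KUNodes h RL → a ≠ b → ¬ a <+: b := by
    intro a b ha hb hab hpre
    unfold KUNodes at ha hb
    simp only at ha hb
    split_ifs at ha hb with hY
    · simp only [Set.mem_singleton_iff] at ha hb
      exact hab (ha.trans hb.symm)
    · obtain ⟨τ, hτX, c, hbc, _, hbX⟩ := hb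
      obtain ⟨σ, hσX, d, had, _, haX⟩ := ha
      have hlt : a.length < b.length := by
        rcases hpre with ⟨t, rfl⟩
        rcases t with _ | ⟨x, t⟩
        · simp at hab
        · simp
      have haτ : a <+: τ := by
        apply List.prefix_of_prefix_length_le hpre
        · rw [hbc]; exact ⟨[c], rfl⟩
        · have : b.length = τ.length + 1 := by simp [hbc]
          omega
      exact haX (Xclosed a τ haτ hτX)
  rintro ⟨ℓ, hℓ, h1, h2⟩
  rcases List.prefix_or_prefix_of_prefix h1 h2 with hp | hp
  · exact key θ θ' hθ hθ' hne hp
  · exact key θ' θ hθ' hθ (Ne.symm hne) hp
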